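/- For x in (0,1) and parameters a, b with 1−2b not zero or a negative integer, the function y₂(x) = x^{−2b} { ₂F₁(a−2b, a−b+1/2; 1/2−b; x²) − (2(a−2b)x/(1−2b)) ₂F₁(a−2b+1, a−b+1/2; 3/2−b; x²) } satisfies x(1−x²)y'' + (2b+1 + 2x − (4a−2b+1)x²)y' + 2a(1 + 2(b−a)x)y = 0. -/

import Mathlib

open scoped Nat

/-- Pochhammer symbol (rising factorial). -/
noncomputable def poch (a : ℝ) (n : ℕ) : ℝ := (ascPochhammer ℝ n).eval a

/-- Gauss hypergeometric series ₂F₁(a,b;c;z). -/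
noncomputable def F (a b c z : ℝ) : ℝ :=
  ∑' n : ℕ, poch a n * poch b n / (poch c n * (n ! : ℝ)) * z ^ n

/-- The second Frobenius solution `y₂`. -/
noncomputable def y₂ (a b : ℝ) (t : ℝ) : ℝ :=
  t ^ (-(2 * b)) *
    (F (a - 2 * b) (a - b + 1/2) (1/2 - b) (t ^ 2)
      - (2 * (a - 2 * b) * t / (1 - 2 * b)) * F (a - 2 * b + 1) (a - b + 1/2) (3/2 - b) (t ^ 2))

lemma poch_zero (a : ℝ) : poch a 0 = 1 := by simp [poch]
lemma poch_succ (a : ℝ) (n : ℕ) : poch a (n + 1) = poch a n * (a + n) := by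
  simp [poch, ascPochhammer_succ_eval]
lemma poch_succ_left (a : ℝ) (n : ℕ) : poch a (n + 1) = a * poch (a + 1) n := by
  simp [poch, ascPochhammer_succ_left, Polynomial.eval_mul, Polynomial.eval_comp]
lemma poch_ne_of {c : ℝ} (h : ∀ k : ℕ, c + (k : ℝ) ≠ 0) : ∀ m, poch c m ≠ 0 := by
  intro m; induction m with
  | zero => simp [poch_zero]
  | succ k ih => rw [poch_succ]; exact mul_ne_zero ih (h k)
noncomputable def cc (a b : ℝ) : ℕ → ℝ := fun n =>
  if n % 2 = 0 then
    poch (a - 2*b) (n/2) * poch (a - b + 1/2) (n/2) /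
      (poch (1/2 - b) (n/2) * ((n/2)! : ℝ))
  else
    -(poch (a - 2*b) (n/2 + 1) * poch (a - b + 1/2) (n/2) /
      (poch (1/2 - b) (n/2 + 1) * ((n/2)! : ℝ)))
lemma cc_even (a b : ℝ) (m : ℕ) :
    cc a b (2*m) = poch (a - 2*b) m * poch (a - b + 1/2) m /
      (poch (1/2 - b) m * (m ! : ℝ)) := by
  simp [cc, Nat.mul_mod_right, Nat.mul_div_cancel_left _ (by norm_num : 0 < 2)]
lemma cc_odd (a b : ℝ) (m : ℕ) :
    cc a b (2*m + 1) = -(poch (a - 2*b) (m+1) * poch (a - b + 1/2) m /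
      (poch (1/2 - b) (m+1) * (m ! : ℝ))) := by
  have h1 : (2*m + 1) % 2 = 1 := by omega
  have h2 : (2*m + 1) / 2 = m := by omega
  simp [cc, h1, h2]

lemma aux_even (m am bm cm p q c f : ℝ) (hc : c ≠ 0) (hcm : cm ≠ 0) (hf : f ≠ 0)
    (hm : m + 1 ≠ 0) (hrel : bm + cm = 1 + am + m) :
    (2*m+2)*(2*cm+1) * (p*am*(q*bm) / ((c*cm) * ((m+1)*f)))
      + 2*(m+1+am) * (-(p*am*q / ((c*cm) * f)))
      - (2*bm-1)*(2*am) * (p*q/(c*f)) = 0 := by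
  obtain rfl : bm = 1 + am + m - cm := by linarith
  field_simp
  ring

lemma aux_odd (m am bm cm cm1 p q c f : ℝ) (hc : c ≠ 0) (hcm : cm ≠ 0) (hcm1 : cm1 ≠ 0)
    (hf : f ≠ 0) (hm : m + 1 ≠ 0) :
    (2*m+3)*(2*cm1) * (-(p*am*(am+1)*(q*bm) / ((c*cm*cm1) * ((m+1)*f))))
      + 2*(m+2+am) * (p*am*(q*bm) / ((c*cm) * ((m+1)*f)))
      - (2*bm)*(2*am+1) * (-(p*am*q / ((c*cm) * f))) = 0 := by
  field_simp
  ring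

section
variable {a b : ℝ} (hb : ∀ k : ℕ, 1 - 2 * b + (k : ℝ) ≠ 0)
include hb

lemma halfC_ne : ∀ m : ℕ, (1/2 - b + (m : ℝ)) ≠ 0 := by
  intro m h
  apply hb (2*m)
  push_cast
  linarith

lemma pochC_ne (m : ℕ) : poch (1/2 - b) m ≠ 0 := poch_ne_of (halfC_ne hb) m

lemma rec_head : (1 - 2*b) * cc a b 1 + 2*(a - 2*b) * cc a b 0 = 0 := by
  have h0 : cc a b 0 = 1 := by simp [cc, poch_zero]
  have h1 : cc a b 1 = -((a - 2*b) / (1/2 - b)) := by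
    have h := cc_odd a b 0
    norm_num [poch_succ, poch_zero] at h
    simpa using h
  have hC0 : (1/2 - b : ℝ) ≠ 0 := by
    have := halfC_ne hb 0; simpa using this
  have h2C : (1 - 2*b : ℝ) ≠ 0 := by have := hb 0; simpa using this
  rw [h0, h1]
  field_simp [h2C]
  ring

lemma rec_step (n : ℕ) :
    ((n:ℝ)+2) * (((n:ℝ)+2) - 2*b) * cc a b (n+2)
      + 2*(((n:ℝ)+1) + a - 2*b) * cc a b (n+1)
      - ((n:ℝ)+2*a-2*b) * ((n:ℝ)+2*a-4*b) * cc a b n = 0 := by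
  have hfact : ∀ m : ℕ, ((m ! : ℕ) : ℝ) ≠ 0 := fun m =>
    Nat.cast_ne_zero.2 (Nat.factorial_ne_zero m)
  obtain ⟨m, rfl | rfl⟩ := Nat.even_or_odd' n
  · -- n = 2m
    have e2 : cc a b (2*m + 2) = poch (a - 2*b) (m+1) * poch (a - b + 1/2) (m+1) /
        (poch (1/2 - b) (m+1) * ((m+1)! : ℝ)) := by
      simpa [Nat.mul_succ] using cc_even a b (m+1)
    rw [e2, cc_odd a b m, cc_even a b m,
      poch_succ (a-2*b), poch_succ (a-b+1/2), poch_succ (1/2-b), Nat.factorial_succ]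
    push_cast
    linear_combination aux_even (m:ℝ) (a-2*b+(m:ℝ)) (a-b+1/2+(m:ℝ)) (1/2-b+(m:ℝ))
      (poch (a-2*b) m) (poch (a-b+1/2) m) (poch (1/2-b) m) ((m ! : ℕ) : ℝ)
      (pochC_ne hb m) (halfC_ne hb m) (hfact m) (by positivity) (by ring)
  · -- n = 2m+1
    have e2 : cc a b (2*m + 1 + 2) = -(poch (a - 2*b) (m+2) * poch (a - b + 1/2) (m+1) /
        (poch (1/2 - b) (m+2) * ((m+1)! : ℝ))) := by
      have := cc_odd a b (m+1)
      rw [show 2*(m+1) + 1 = 2*m + 1 + 2 by ring] at this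
      simpa using this
    have e1 : cc a b (2*m + 1 + 1) = poch (a - 2*b) (m+1) * poch (a - b + 1/2) (m+1) /
        (poch (1/2 - b) (m+1) * ((m+1)! : ℝ)) := by
      have := cc_even a b (m+1)
      rw [show 2*(m+1) = 2*m + 1 + 1 by ring] at this
      simpa using this
    have hcm1 : (1/2 - b + ((m:ℝ)+1)) ≠ 0 := by
      intro h; exact halfC_ne hb (m+1) (by push_cast; linarith)
    rw [e2, e1, cc_odd a b m,
      show m + 2 = (m+1)+1 from rfl, poch_succ (a-2*b) (m+1), poch_succ (1/2-b) (m+1),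
      poch_succ (a-2*b) m, poch_succ (a-b+1/2) m, poch_succ (1/2-b) m, Nat.factorial_succ]
    push_cast
    linear_combination aux_odd (m:ℝ) (a-2*b+(m:ℝ)) (a-b+1/2+(m:ℝ)) (1/2-b+(m:ℝ)) (1/2-b+((m:ℝ)+1))
      (poch (a-2*b) m) (poch (a-b+1/2) m) (poch (1/2-b) m) ((m ! : ℕ) : ℝ)
      (pochC_ne hb m) (halfC_ne hb m) hcm1 (hfact m) (by positivity)

end

open Filter Topology

lemma tendsto_ratio (α β γ : ℝ) (hγ : ∀ m : ℕ, γ + (m:ℝ) ≠ 0) :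
    Tendsto (fun m : ℕ => (α + m) * (β + m) / ((γ + m) * ((m:ℝ) + 1)))
      atTop (𝓝 1) := by
  have hnat : Tendsto (fun m : ℕ => (m:ℝ)) atTop atTop := tendsto_natCast_atTop_atTop
  have h1 : Tendsto (fun m : ℕ => ((m:ℝ) + 1)) atTop atTop :=
    tendsto_atTop_add_const_right _ 1 hnat
  have h2 : Tendsto (fun m : ℕ => (γ + (m:ℝ))) atTop atTop :=
    tendsto_atTop_add_const_left _ γ hnat
  have l1 : Tendsto (fun m : ℕ => 1 + (α - 1)/((m:ℝ)+1)) atTop (𝓝 (1 + 0)) :=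
    tendsto_const_nhds.add (Tendsto.div_atTop tendsto_const_nhds h1)
  have l2 : Tendsto (fun m : ℕ => 1 + (β - γ)/(γ + (m:ℝ))) atTop (𝓝 (1 + 0)) :=
    tendsto_const_nhds.add (Tendsto.div_atTop tendsto_const_nhds h2)
  have := l1.mul l2
  norm_num at this
  refine this.congr fun m => ?_
  have hm : ((m:ℝ)+1) ≠ 0 := by positivity
  field_simp [hγ m]
  ring

section
variable {a b : ℝ} (hb : ∀ k : ℕ, 1 - 2 * b + (k : ℝ) ≠ 0)
include hb

lemma summable_even_part {s : ℝ} (hs0 : 0 < s) (hs1 : s < 1) :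
    Summable (fun m : ℕ => cc a b (2*m) * s^(2*m)) := by
  have hrat := (tendsto_ratio (a-2*b) (a-b+1/2) (1/2-b) (halfC_ne hb)).abs.mul_const (s^2)
  norm_num at hrat
  have hlt : s^2 < (1+s^2)/2 := by nlinarith
  have hev := hrat.eventually_lt_const hlt
  refine summable_of_ratio_norm_eventually_le (r := (1+s^2)/2) (by nlinarith) ?_
  filter_upwards [hev] with m hm
  have key : cc a b (2*(m+1)) * s^(2*(m+1))
      = (cc a b (2*m) * s^(2*m)) *
        (((a-2*b) + (m:ℝ)) * ((a-b+1/2) + (m:ℝ)) / (((1/2-b) + (m:ℝ)) * ((m:ℝ)+1)) * s^2) := by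
    rw [cc_even, cc_even, poch_succ, poch_succ, poch_succ, Nat.factorial_succ]
    push_cast
    simp only [div_eq_mul_inv, mul_inv]
    ring
  rw [key, Real.norm_eq_abs, Real.norm_eq_abs, abs_mul]
  calc |cc a b (2*m) * s^(2*m)| * |((a-2*b) + (m:ℝ)) * ((a-b+1/2) + (m:ℝ)) / (((1/2-b) + (m:ℝ)) * ((m:ℝ)+1)) * s^2|
      ≤ |cc a b (2*m) * s^(2*m)| * ((1+s^2)/2) := by
        refine mul_le_mul_of_nonneg_left ?_ (abs_nonneg _)
        rw [abs_mul, abs_of_nonneg (sq_nonneg s)]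
        exact le_of_lt hm
    _ = (1+s^2)/2 * |cc a b (2*m) * s^(2*m)| := by ring

lemma summable_odd_part {s : ℝ} (hs0 : 0 < s) (hs1 : s < 1) :
    Summable (fun m : ℕ => cc a b (2*m+1) * s^(2*m+1)) := by
  have hγ : ∀ m : ℕ, (1/2 - b + 1) + (m:ℝ) ≠ 0 := by
    intro m h
    exact hb (2*m+2) (by push_cast; linarith)
  have hrat := (tendsto_ratio (a-2*b+1) (a-b+1/2) (1/2-b+1) hγ).abs.mul_const (s^2)
  norm_num at hrat
  have hlt : s^2 < (1+s^2)/2 := by nlinarith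
  have hev := hrat.eventually_lt_const hlt
  refine summable_of_ratio_norm_eventually_le (r := (1+s^2)/2) (by nlinarith) ?_
  filter_upwards [hev] with m hm
  have key : cc a b (2*(m+1)+1) * s^(2*(m+1)+1)
      = (cc a b (2*m+1) * s^(2*m+1)) *
        (((a-2*b+1) + (m:ℝ)) * ((a-b+1/2) + (m:ℝ)) / (((1/2-b+1) + (m:ℝ)) * ((m:ℝ)+1)) * s^2) := by
    rw [cc_odd, cc_odd, show m+1+1 = (m+1)+1 from rfl,
      poch_succ (a-2*b) (m+1), poch_succ (a-b+1/2) m, poch_succ (1/2-b) (m+1),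
      Nat.factorial_succ]
    push_cast
    simp only [div_eq_mul_inv, mul_inv, neg_mul, mul_neg, neg_neg]
    ring
  rw [key, Real.norm_eq_abs, Real.norm_eq_abs, abs_mul]
  calc |cc a b (2*m+1) * s^(2*m+1)| * |((a-2*b+1) + (m:ℝ)) * ((a-b+1/2) + (m:ℝ)) / (((1/2-b+1) + (m:ℝ)) * ((m:ℝ)+1)) * s^2|
      ≤ |cc a b (2*m+1) * s^(2*m+1)| * ((1+s^2)/2) := by
        refine mul_le_mul_of_nonneg_left ?_ (abs_nonneg _)
        rw [abs_mul, abs_of_nonneg (sq_nonneg s)]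
        exact le_of_lt hm
    _ = (1+s^2)/2 * |cc a b (2*m+1) * s^(2*m+1)| := by ring

lemma summable_cc_mul {s : ℝ} (hs0 : 0 < s) (hs1 : s < 1) :
    Summable (fun n : ℕ => cc a b n * s^n) :=
  Summable.even_add_odd (summable_even_part hb hs0 hs1) (summable_odd_part hb hs0 hs1)

lemma cc_bound {s : ℝ} (hs0 : 0 < s) (hs1 : s < 1) :
    ∃ M : ℝ, 0 ≤ M ∧ ∀ n : ℕ, |cc a b n| * s^n ≤ M := by
  have h := (summable_cc_mul (a := a) hb hs0 hs1).tendsto_atTop_zero.abs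
  rw [abs_zero] at h
  obtain ⟨M, hM⟩ := h.bddAbove_range
  rw [mem_upperBounds] at hM
  refine ⟨M, le_trans (abs_nonneg _) (hM _ ⟨0, rfl⟩), fun n => ?_⟩
  have h2 := hM _ ⟨n, rfl⟩
  simp only [abs_mul, abs_pow, abs_of_pos hs0] at h2
  exact h2

end

lemma helper_summable {q : ℝ} (hq0 : 0 ≤ q) (hq1 : q < 1) (K : ℝ) (f : ℕ → ℝ)
    (hf : ∀ n, |f n| ≤ K * (((n:ℝ)+1)*((n:ℝ)+2)) * q^n) : Summable f := by
  have hq : ‖q‖ < 1 := by rwa [Real.norm_eq_abs, abs_of_nonneg hq0]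
  have h2 := summable_pow_mul_geometric_of_norm_lt_one (R:=ℝ) 2 hq
  have h1 := summable_pow_mul_geometric_of_norm_lt_one (R:=ℝ) 1 hq
  have h0 := summable_pow_mul_geometric_of_norm_lt_one (R:=ℝ) 0 hq
  have hs : Summable (fun n : ℕ => K * (((n:ℝ)+1)*((n:ℝ)+2)) * q^n) := by
    have := (((h1.mul_left 3).add (h0.mul_left 2)).add h2).mul_left K
    refine this.congr fun n => ?_
    push_cast
    ring_nf
  exact Summable.of_norm_bounded hs (by simpa [Real.norm_eq_abs] using hf)

noncomputable def gg (a b : ℝ) (y : ℝ) : ℝ := ∑' n : ℕ, cc a b n * y ^ n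
noncomputable def gg1 (a b : ℝ) (y : ℝ) : ℝ := ∑' n : ℕ, ((n:ℝ)+1) * cc a b (n+1) * y ^ n
noncomputable def gg2 (a b : ℝ) (y : ℝ) : ℝ :=
  ∑' n : ℕ, ((n:ℝ)+2) * ((n:ℝ)+1) * cc a b (n+2) * y ^ n

section
variable {a b r s M : ℝ} (h0r : 0 < r) (hrs : r < s) (hs1 : s < 1)
  (hM0 : 0 ≤ M) (hM : ∀ n : ℕ, |cc a b n| ≤ M / s^n)

lemma q_nonneg (h0r : 0 < r) (hrs : r < s) : (0:ℝ) ≤ r/s ∧ r/s < 1 := by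
  have hs0 : 0 < s := lt_trans h0r hrs
  constructor
  · positivity
  · rw [div_lt_one hs0]; exact hrs

set_option maxHeartbeats 2000000 in
include h0r hrs hs1 hM0 hM in
lemma hasDerivAt_gg : ∀ y : ℝ, |y| < r → HasDerivAt (gg a b) (gg1 a b y) y := by
  obtain ⟨hq0, hq1⟩ := q_nonneg h0r hrs
  have hs0 : 0 < s := lt_trans h0r hrs
  intro y hy
  have hymem : y ∈ Metric.ball (0:ℝ) r := by simpa [mem_ball_zero_iff] using hy
  have husum : Summable (fun n : ℕ => (M/r) * (((n:ℝ)+1)*((n:ℝ)+2)) * (r/s)^n) :=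
    helper_summable hq0 hq1 (M/r) _ (fun n => le_of_eq (abs_of_nonneg (by positivity)))
  have hbound : ∀ (n : ℕ) (z : ℝ), z ∈ Metric.ball (0:ℝ) r →
      ‖cc a b n * ((n:ℝ) * z^(n-1))‖ ≤ (M/r) * (((n:ℝ)+1)*((n:ℝ)+2)) * (r/s)^n := by
    intro n z hz
    rw [mem_ball_zero_iff, Real.norm_eq_abs] at hz
    match n with
    | 0 => simp; positivity
    | (k+1) =>
      rw [Real.norm_eq_abs, abs_mul, abs_mul, abs_pow, Nat.abs_cast]
      have h1 : |z|^(k+1-1) ≤ r^k := by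
        simpa using pow_le_pow_left₀ (abs_nonneg z) hz.le k
      calc |cc a b (k+1)| * ((((k+1):ℕ):ℝ) * |z|^(k+1-1))
          ≤ (M/s^(k+1)) * ((((k:ℝ))+1) * r^k) := by
            apply mul_le_mul (hM (k+1)) ?_ (by positivity) (by positivity)
            push_cast
            exact mul_le_mul_of_nonneg_left h1 (by positivity)
        _ ≤ (M/r) * ((((k+1):ℕ):ℝ)+1) * ((((k+1):ℕ):ℝ)+2) * (r/s)^(k+1) := by
            have e : (M/r) * ((((k+1):ℕ):ℝ)+1) * ((((k+1):ℕ):ℝ)+2) * (r/s)^(k+1)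
                = (M * r^k / s^(k+1)) * ((((k:ℝ))+2)*(((k:ℝ))+3)) := by
              rw [div_pow]
              field_simp
              push_cast
              ring
            have e2 : (M/s^(k+1)) * ((((k:ℝ))+1) * r^k) = (M * r^k / s^(k+1)) * (((k:ℝ))+1) := by
              ring
            rw [e, e2]
            exact mul_le_mul_of_nonneg_left (by nlinarith [sq_nonneg ((k:ℝ))]) (by positivity)
        _ = (M/r) * (((((k+1):ℕ):ℝ)+1) * ((((k+1):ℕ):ℝ)+2)) * (r/s)^(k+1) := by ring
  have hg0 : Summable (fun n : ℕ => cc a b n * (0:ℝ)^n) := by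
    apply summable_of_finite_support
    apply Set.Finite.subset (Set.finite_singleton 0)
    intro n hn
    simp only [Function.mem_support] at hn
    by_contra h
    exact hn (by simp [zero_pow (by simpa using h)])
  have hD := hasDerivAt_tsum_of_isPreconnected
    (g := fun (n : ℕ) (z : ℝ) => cc a b n * z^n)
    (g' := fun (n : ℕ) (z : ℝ) => cc a b n * ((n:ℝ) * z^(n-1)))
    husum Metric.isOpen_ball
    (convex_ball (0:ℝ) r).isPreconnected
    (fun n z _ => (hasDerivAt_pow n z).const_mul (cc a b n))
    hbound (by simpa [mem_ball_zero_iff] using h0r) hg0 hymem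
  have hsum : Summable (fun n : ℕ => cc a b n * ((n:ℝ) * y^(n-1))) :=
    Summable.of_norm_bounded husum (fun n => hbound n y hymem)
  have hshift : Summable (fun n : ℕ => cc a b (n+1) * (((n+1:ℕ):ℝ) * y^(n+1-1))) :=
    (summable_nat_add_iff 1).2 hsum
  have heq : (∑' n : ℕ, cc a b n * ((n:ℝ) * y^(n-1))) = gg1 a b y := by
    rw [tsum_eq_zero_add' hshift]
    simp only [Nat.cast_zero, zero_mul, mul_zero, zero_add]
    exact tsum_congr fun n => by push_cast [Nat.add_sub_cancel]; ring
  rw [← heq]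
  exact hD

set_option maxHeartbeats 2000000 in
include h0r hrs hs1 hM0 hM in
lemma hasDerivAt_gg1 : ∀ y : ℝ, |y| < r → HasDerivAt (gg1 a b) (gg2 a b y) y := by
  obtain ⟨hq0, hq1⟩ := q_nonneg h0r hrs
  have hs0 : 0 < s := lt_trans h0r hrs
  intro y hy
  have hymem : y ∈ Metric.ball (0:ℝ) r := by simpa [mem_ball_zero_iff] using hy
  have husum : Summable (fun n : ℕ => (M/(r*s)) * (((n:ℝ)+1)*((n:ℝ)+2)) * (r/s)^n) :=
    helper_summable hq0 hq1 (M/(r*s)) _ (fun n => le_of_eq (abs_of_nonneg (by positivity)))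
  have hbound : ∀ (n : ℕ) (z : ℝ), z ∈ Metric.ball (0:ℝ) r →
      ‖((n:ℝ)+1) * cc a b (n+1) * ((n:ℝ) * z^(n-1))‖
        ≤ (M/(r*s)) * (((n:ℝ)+1)*((n:ℝ)+2)) * (r/s)^n := by
    intro n z hz
    rw [mem_ball_zero_iff, Real.norm_eq_abs] at hz
    match n with
    | 0 => simp; positivity
    | (k+1) =>
      rw [Real.norm_eq_abs, abs_mul, abs_mul, abs_mul, abs_pow, Nat.abs_cast]
      have h1 : |z|^(k+1-1) ≤ r^k := by
        simpa using pow_le_pow_left₀ (abs_nonneg z) hz.le k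
      have habs : |(((k+1):ℕ):ℝ)+1| = ((k:ℝ))+2 := by
        rw [abs_of_nonneg (by positivity)]; push_cast; ring
      calc |(((k+1):ℕ):ℝ)+1| * |cc a b (k+1+1)| * ((((k+1):ℕ):ℝ) * |z|^(k+1-1))
          ≤ (((k:ℝ))+2) * (M/s^(k+2)) * ((((k:ℝ))+1) * r^k) := by
            rw [habs]
            apply mul_le_mul ?_ ?_ (by positivity) (by positivity)
            · exact mul_le_mul_of_nonneg_left (hM (k+2)) (by positivity)
            · push_cast
              exact mul_le_mul_of_nonneg_left h1 (by positivity)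
        _ ≤ (M/(r*s)) * (((((k+1):ℕ):ℝ)+1) * ((((k+1):ℕ):ℝ)+2)) * (r/s)^(k+1) := by
            have e : (M/(r*s)) * (((((k+1):ℕ):ℝ)+1) * ((((k+1):ℕ):ℝ)+2)) * (r/s)^(k+1)
                = (M * r^k / s^(k+2)) * ((((k:ℝ))+2)*(((k:ℝ))+3)) := by
              rw [div_pow]
              field_simp
              push_cast
              ring
            have e2 : (((k:ℝ))+2) * (M/s^(k+2)) * ((((k:ℝ))+1) * r^k)
                = (M * r^k / s^(k+2)) * ((((k:ℝ))+2)*(((k:ℝ))+1)) := by ring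
            rw [e, e2]
            exact mul_le_mul_of_nonneg_left (by nlinarith [sq_nonneg ((k:ℝ))]) (by positivity)
  have hg0 : Summable (fun n : ℕ => ((n:ℝ)+1) * cc a b (n+1) * (0:ℝ)^n) := by
    apply summable_of_finite_support
    apply Set.Finite.subset (Set.finite_singleton 0)
    intro n hn
    simp only [Function.mem_support] at hn
    by_contra h
    exact hn (by simp [zero_pow (by simpa using h)])
  have hD := hasDerivAt_tsum_of_isPreconnected
    (g := fun (n : ℕ) (z : ℝ) => ((n:ℝ)+1) * cc a b (n+1) * z^n)
    (g' := fun (n : ℕ) (z : ℝ) => ((n:ℝ)+1) * cc a b (n+1) * ((n:ℝ) * z^(n-1)))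
    husum Metric.isOpen_ball
    (convex_ball (0:ℝ) r).isPreconnected
    (fun n z _ => (hasDerivAt_pow n z).const_mul (((n:ℝ)+1) * cc a b (n+1)))
    hbound (by simpa [mem_ball_zero_iff] using h0r) hg0 hymem
  have hsum : Summable (fun n : ℕ => ((n:ℝ)+1) * cc a b (n+1) * ((n:ℝ) * y^(n-1))) :=
    Summable.of_norm_bounded husum (fun n => hbound n y hymem)
  have hshift : Summable
      (fun n : ℕ => (((n+1:ℕ):ℝ)+1) * cc a b (n+1+1) * (((n+1:ℕ):ℝ) * y^(n+1-1))) :=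
    (summable_nat_add_iff 1).2 hsum
  have heq : (∑' n : ℕ, ((n:ℝ)+1) * cc a b (n+1) * ((n:ℝ) * y^(n-1))) = gg2 a b y := by
    rw [tsum_eq_zero_add' hshift]
    simp only [Nat.cast_zero, zero_mul, mul_zero, zero_add]
    exact tsum_congr fun n => by push_cast [Nat.add_sub_cancel]; ring
  rw [← heq]
  exact hD

end

section
variable {a b : ℝ} (hb : ∀ k : ℕ, 1 - 2 * b + (k : ℝ) ≠ 0)
include hb

lemma gg_eq_F {t : ℝ} (h0 : 0 < t) (h1 : t < 1) :
    gg a b t = F (a - 2 * b) (a - b + 1/2) (1/2 - b) (t ^ 2)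
      - (2 * (a - 2 * b) * t / (1 - 2 * b)) * F (a - 2 * b + 1) (a - b + 1/2) (3/2 - b) (t ^ 2) := by
  have he : Summable (fun k : ℕ => cc a b (2*k) * t^(2*k)) := summable_even_part hb h0 h1
  have ho : Summable (fun k : ℕ => cc a b (2*k+1) * t^(2*k+1)) := summable_odd_part hb h0 h1
  have hsplit := tsum_even_add_odd (f := fun n : ℕ => cc a b n * t^n) he ho
  have heven : (∑' k : ℕ, cc a b (2*k) * t^(2*k))
      = F (a - 2 * b) (a - b + 1/2) (1/2 - b) (t ^ 2) := by
    rw [F]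
    exact tsum_congr fun m => by rw [cc_even, pow_mul]
  have hodd : (∑' k : ℕ, cc a b (2*k+1) * t^(2*k+1))
      = -((2 * (a - 2 * b) * t / (1 - 2 * b)) *
          F (a - 2 * b + 1) (a - b + 1/2) (3/2 - b) (t ^ 2)) := by
    rw [F, ← tsum_mul_left, ← tsum_neg]
    refine tsum_congr fun m => ?_
    rw [cc_odd, poch_succ_left (a - 2*b), poch_succ_left (1/2 - b),
      show (1/2 - b + 1 : ℝ) = 3/2 - b by ring]
    have h2C : (1 - 2*b : ℝ) ≠ 0 := by have := hb 0; simpa using this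
    have hP3 : poch (3/2 - b) m ≠ 0 := by
      apply poch_ne_of
      intro k h
      exact hb (2*k+2) (by push_cast; linarith)
    have hf : ((m ! : ℕ) : ℝ) ≠ 0 := Nat.cast_ne_zero.2 (Nat.factorial_ne_zero m)
    have hhalf : (1/2 - b : ℝ) = (1 - 2*b)/2 := by ring
    rw [hhalf]
    field_simp
    ring
  rw [gg, ← hsplit, heven, hodd]
  ring

lemma y2_eq {t : ℝ} (h0 : 0 < t) (h1 : t < 1) :
    y₂ a b t = t ^ (-(2 * b)) * gg a b t := by
  rw [y₂, gg_eq_F hb h0 h1]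

end

section
variable {a b r s M x : ℝ} (hb : ∀ k : ℕ, 1 - 2 * b + (k : ℝ) ≠ 0)
  (hx0 : 0 < x) (hxs : x < s) (hs1 : s < 1)
  (hM0 : 0 ≤ M) (hM : ∀ n : ℕ, |cc a b n| ≤ M / s^n)

include hb hx0 hxs hs1 hM0 hM in
lemma key_identity :
    x*(1-x^2) * gg2 a b x + ((1-2*b) + 2*x - (4*a-6*b+1)*x^2) * gg1 a b x
      + (2*(a-2*b) - 4*(a-b)*(a-2*b)*x) * gg a b x = 0 := by
  have hs0 : 0 < s := lt_trans hx0 hxs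
  have hx1 : x < 1 := lt_trans hxs hs1
  have shape : ∀ (j : ℕ) (P : ℕ → ℝ), (∀ n, |P n| ≤ ((n:ℝ)+1)*((n:ℝ)+2)) →
      Summable (fun n : ℕ => P n * cc a b (n+j) * x^(n+1)) := by
    intro j P hP
    apply helper_summable (q := x/s) (by positivity)
      (by rw [div_lt_one hs0]; exact hxs) (M * x / s^j)
    intro n
    rw [abs_mul, abs_mul, abs_pow, abs_of_pos hx0]
    calc |P n| * |cc a b (n+j)| * x^(n+1)
        ≤ (((n:ℝ)+1)*((n:ℝ)+2)) * (M / s^(n+j)) * x^(n+1) := by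
          apply mul_le_mul_of_nonneg_right ?_ (by positivity)
          exact mul_le_mul (hP n) (hM _) (abs_nonneg _) (by positivity)
      _ = (M*x/s^j) * (((n:ℝ)+1)*((n:ℝ)+2)) * (x/s)^n := by
          rw [pow_add, div_pow]
          field_simp
          ring
  -- summabilities
  have S1 : Summable (fun n : ℕ => ((n:ℝ)+2)*((n:ℝ)+1) * cc a b (n+2) * x^(n+1)) :=
    shape 2 _ (fun n => by
      rw [abs_of_nonneg (by positivity)]
      nlinarith [Nat.cast_nonneg (α := ℝ) n])
  have S2 : Summable (fun n : ℕ => (n:ℝ)*((n:ℝ)-1) * cc a b n * x^(n+1)) := by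
    have := shape 0 (fun n => (n:ℝ)*((n:ℝ)-1)) (fun n => by
      rw [abs_le]; constructor <;> nlinarith [Nat.cast_nonneg (α := ℝ) n])
    exact this.congr fun n => by norm_num
  have S3 : Summable (fun n : ℕ => ((n:ℝ)+2) * cc a b (n+2) * x^(n+1)) :=
    shape 2 _ (fun n => by
      rw [abs_of_nonneg (by positivity)]
      nlinarith [Nat.cast_nonneg (α := ℝ) n])
  have S4 : Summable (fun n : ℕ => ((n:ℝ)+1) * cc a b (n+1) * x^(n+1)) :=
    shape 1 _ (fun n => by
      rw [abs_of_nonneg (by positivity)]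
      nlinarith [Nat.cast_nonneg (α := ℝ) n])
  have S5 : Summable (fun n : ℕ => (n:ℝ) * cc a b n * x^(n+1)) := by
    have := shape 0 (fun n => (n:ℝ)) (fun n => by
      rw [abs_of_nonneg (by positivity)]
      nlinarith [Nat.cast_nonneg (α := ℝ) n])
    exact this.congr fun n => by norm_num
  have S6 : Summable (fun n : ℕ => cc a b (n+1) * x^(n+1)) := by
    have := shape 1 (fun _ => (1:ℝ)) (fun n => by
      rw [abs_one]
      nlinarith [Nat.cast_nonneg (α := ℝ) n])
    exact this.congr fun n => by rw [one_mul]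
  have S7 : Summable (fun n : ℕ => cc a b n * x^(n+1)) := by
    have := shape 0 (fun _ => (1:ℝ)) (fun n => by
      rw [abs_one]
      nlinarith [Nat.cast_nonneg (α := ℝ) n])
    exact this.congr fun n => by rw [one_mul, Nat.add_zero]

  -- strip-shift summabilities
  have bd1 : ∀ n : ℕ, |(((n:ℝ)+1)*(n:ℝ))*x| ≤ ((n:ℝ)+1)*((n:ℝ)+2) := by
    intro n
    rw [abs_mul, abs_mul, abs_of_nonneg (by positivity : (0:ℝ) ≤ ((n:ℝ)+1)),
      abs_of_nonneg (Nat.cast_nonneg n), abs_of_pos hx0]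
    nlinarith [Nat.cast_nonneg (α := ℝ) n,
      mul_le_mul_of_nonneg_left hx1.le
        (by positivity : (0:ℝ) ≤ ((n:ℝ)+1)*(n:ℝ))]
  have bd2 : ∀ n : ℕ, |(((n:ℝ)+2)*((n:ℝ)+1))*x^2| ≤ ((n:ℝ)+1)*((n:ℝ)+2) := by
    intro n
    rw [abs_mul, abs_mul, abs_of_nonneg (by positivity : (0:ℝ) ≤ ((n:ℝ)+2)),
      abs_of_nonneg (by positivity : (0:ℝ) ≤ ((n:ℝ)+1)), abs_of_nonneg (sq_nonneg x)]
    have hxx : x^2 ≤ 1 := by nlinarith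
    nlinarith [Nat.cast_nonneg (α := ℝ) n,
      mul_le_mul_of_nonneg_left hxx
        (by positivity : (0:ℝ) ≤ ((n:ℝ)+2)*((n:ℝ)+1))]
  have bd3 : ∀ n : ℕ, |(((n:ℝ)+1))*x| ≤ ((n:ℝ)+1)*((n:ℝ)+2) := by
    intro n
    rw [abs_mul, abs_of_nonneg (by positivity : (0:ℝ) ≤ ((n:ℝ)+1)), abs_of_pos hx0]
    nlinarith [Nat.cast_nonneg (α := ℝ) n]
  have A1 : Summable (fun n : ℕ => ((n:ℝ)+1)*(((n:ℝ)+1)-1) * cc a b (n+1) * x^(n+1+1)) := by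
    have := shape 1 (fun n => (((n:ℝ)+1)*(n:ℝ))*x) bd1
    exact this.congr fun n => by ring
  have A2 : Summable (fun n : ℕ => (((n:ℝ)+1)+1)*((((n:ℝ)+1)+1)-1) * cc a b (n+1+1) * x^(n+1+1+1)) := by
    have := shape 2 (fun n => (((n:ℝ)+2)*((n:ℝ)+1))*x^2) bd2
    exact this.congr fun n => by ring
  have A3 : Summable (fun n : ℕ => (((n:ℝ)+1)+1) * cc a b (n+1+1) * x^(n+1)) := by
    have := shape 2 (fun n => ((n:ℝ)+2)) (fun n => by
      rw [abs_of_nonneg (by positivity)]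
      nlinarith [Nat.cast_nonneg (α := ℝ) n])
    exact this.congr fun n => by ring
  have A4 : Summable (fun n : ℕ => ((n:ℝ)+1) * cc a b (n+1) * x^(n+1+1)) := by
    have := shape 1 (fun n => (((n:ℝ)+1))*x) bd3
    exact this.congr fun n => by ring
  -- series representations
  have e1 : x * gg2 a b x = ∑' n : ℕ, ((n:ℝ)+2)*((n:ℝ)+1) * cc a b (n+2) * x^(n+1) := by
    rw [gg2, ← tsum_mul_left]
    exact tsum_congr fun n => by ring
  have e2 : (∑' n : ℕ, (n:ℝ)*((n:ℝ)-1) * cc a b n * x^(n+1)) = x^3 * gg2 a b x := by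
    have st1 : (∑' n : ℕ, (n:ℝ)*((n:ℝ)-1) * cc a b n * x^(n+1))
        = ((0:ℕ):ℝ)*(((0:ℕ):ℝ)-1) * cc a b 0 * x^(0+1)
          + ∑' n : ℕ, ((n:ℝ)+1)*(((n:ℝ)+1)-1) * cc a b (n+1) * x^(n+1+1) := by
      have h := tsum_eq_zero_add'
        (f := fun n : ℕ => (n:ℝ)*((n:ℝ)-1) * cc a b n * x^(n+1))
        (by exact A1.congr fun n => by push_cast; ring)
      rw [h]
      congr 1
      exact tsum_congr fun n => by push_cast; ring
    have st2 : (∑' n : ℕ, ((n:ℝ)+1)*(((n:ℝ)+1)-1) * cc a b (n+1) * x^(n+1+1))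
        = ((0:ℝ)+1)*(((0:ℝ)+1)-1) * cc a b (0+1) * x^(0+1+1)
          + ∑' n : ℕ, (((n:ℝ)+1)+1)*((((n:ℝ)+1)+1)-1) * cc a b (n+1+1) * x^(n+1+1+1) := by
      have h := tsum_eq_zero_add'
        (f := fun n : ℕ => ((n:ℝ)+1)*(((n:ℝ)+1)-1) * cc a b (n+1) * x^(n+1+1))
        (by exact A2.congr fun n => by push_cast; ring)
      rw [h]
      congr 1
      · norm_num
      · exact tsum_congr fun n => by push_cast; ring
    rw [st1, st2, gg2, ← tsum_mul_left]
    norm_num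
    exact tsum_congr fun n => by push_cast; ring
  have e3 : gg1 a b x = cc a b 1 + ∑' n : ℕ, ((n:ℝ)+2) * cc a b (n+2) * x^(n+1) := by
    rw [gg1]
    have h := tsum_eq_zero_add'
      (f := fun n : ℕ => ((n:ℝ)+1) * cc a b (n+1) * x^n)
      (by exact A3.congr fun n => by push_cast; ring)
    rw [h]
    norm_num
    exact tsum_congr fun n => by push_cast; ring
  have e4 : x * gg1 a b x = ∑' n : ℕ, ((n:ℝ)+1) * cc a b (n+1) * x^(n+1) := by
    rw [gg1, ← tsum_mul_left]
    exact tsum_congr fun n => by ring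
  have e5 : (∑' n : ℕ, (n:ℝ) * cc a b n * x^(n+1)) = x^2 * gg1 a b x := by
    have st1 : (∑' n : ℕ, (n:ℝ) * cc a b n * x^(n+1))
        = ((0:ℕ):ℝ) * cc a b 0 * x^(0+1)
          + ∑' n : ℕ, ((n:ℝ)+1) * cc a b (n+1) * x^(n+1+1) := by
      have h := tsum_eq_zero_add'
        (f := fun n : ℕ => (n:ℝ) * cc a b n * x^(n+1))
        (by exact A4.congr fun n => by push_cast; ring)
      rw [h]
      congr 1
      exact tsum_congr fun n => by push_cast; ring
    rw [st1, gg1, ← tsum_mul_left]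
    norm_num
    exact tsum_congr fun n => by push_cast; ring
  have e6 : gg a b x = cc a b 0 + ∑' n : ℕ, cc a b (n+1) * x^(n+1) := by
    rw [gg]
    have h := tsum_eq_zero_add'
      (f := fun n : ℕ => cc a b n * x^n) S6
    rw [h]
    norm_num
  have e7 : x * gg a b x = ∑' n : ℕ, cc a b n * x^(n+1) := by
    rw [gg, ← tsum_mul_left]
    exact tsum_congr fun n => by ring
  -- the combined sum vanishes
  have HT : (∑' n : ℕ, ((n:ℝ)+2)*((n:ℝ)+1) * cc a b (n+2) * x^(n+1))
      - (∑' n : ℕ, (n:ℝ)*((n:ℝ)-1) * cc a b n * x^(n+1))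
      + (1-2*b) * (∑' n : ℕ, ((n:ℝ)+2) * cc a b (n+2) * x^(n+1))
      + 2 * (∑' n : ℕ, ((n:ℝ)+1) * cc a b (n+1) * x^(n+1))
      - (4*a-6*b+1) * (∑' n : ℕ, (n:ℝ) * cc a b n * x^(n+1))
      + (2*(a-2*b)) * (∑' n : ℕ, cc a b (n+1) * x^(n+1))
      - (4*(a-b)*(a-2*b)) * (∑' n : ℕ, cc a b n * x^(n+1)) = 0 := by
    rw [← tsum_mul_left, ← tsum_mul_left, ← tsum_mul_left, ← tsum_mul_left, ← tsum_mul_left,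
      ← Summable.tsum_sub S1 S2,
      ← Summable.tsum_add (S1.sub S2) (S3.mul_left (1-2*b)),
      ← Summable.tsum_add ((S1.sub S2).add (S3.mul_left (1-2*b))) (S4.mul_left 2),
      ← Summable.tsum_sub (((S1.sub S2).add (S3.mul_left (1-2*b))).add (S4.mul_left 2))
        (S5.mul_left (4*a-6*b+1)),
      ← Summable.tsum_add ((((S1.sub S2).add (S3.mul_left (1-2*b))).add (S4.mul_left 2)).sub
        (S5.mul_left (4*a-6*b+1))) (S6.mul_left (2*(a-2*b))),
      ← Summable.tsum_sub (((((S1.sub S2).add (S3.mul_left (1-2*b))).add (S4.mul_left 2)).sub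
        (S5.mul_left (4*a-6*b+1))).add (S6.mul_left (2*(a-2*b))))
        (S7.mul_left (4*(a-b)*(a-2*b)))]
    calc _ = ∑' (_ : ℕ), (0:ℝ) := by
          refine tsum_congr fun n => ?_
          linear_combination (x^(n+1)) * rec_step hb n
      _ = 0 := tsum_zero
  linear_combination HT + rec_head hb + e1 + e2 + (1-2*b)*e3 + 2*e4
    + (4*a-6*b+1)*e5 + (2*(a-2*b))*e6 + (-(4*(a-b)*(a-2*b)))*e7


end

theorem y2_solves_ode (a b : ℝ) (hb : ∀ k : ℕ, 1 - 2 * b + (k : ℝ) ≠ 0) :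
    ∀ x ∈ Set.Ioo (0:ℝ) 1,
      x * (1 - x ^ 2) * deriv (deriv (y₂ a b)) x
        + (2 * b + 1 + 2 * x - (4 * a - 2 * b + 1) * x ^ 2) * deriv (y₂ a b) x
        + 2 * a * (1 + 2 * (b - a) * x) * y₂ a b x = 0 := by
  intro x hx
  obtain ⟨hx0, hx1⟩ := hx
  set r : ℝ := (x+1)/2 with hrdef
  set s : ℝ := (r+1)/2 with hsdef
  have hxr : x < r := by rw [hrdef]; linarith
  have hr0 : 0 < r := by rw [hrdef]; linarith
  have hr1 : r < 1 := by rw [hrdef]; linarith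
  have hrs : r < s := by rw [hsdef]; linarith
  have hs1 : s < 1 := by rw [hsdef]; linarith
  have hs0 : 0 < s := lt_trans hr0 hrs
  obtain ⟨M, hM0, hMb⟩ := cc_bound (a := a) hb hs0 hs1
  have hM : ∀ n : ℕ, |cc a b n| ≤ M / s^n :=
    fun n => (le_div_iff₀ (by positivity)).2 (hMb n)
  have hDg := hasDerivAt_gg hr0 hrs hs1 hM0 hM
  have hDg1 := hasDerivAt_gg1 hr0 hrs hs1 hM0 hM
  have habsx : |x| < r := by rw [abs_of_pos hx0]; exact hxr
  have hx_mem : x ∈ Set.Ioo (0:ℝ) r := ⟨hx0, hxr⟩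
  have hder : ∀ t, t ∈ Set.Ioo (0:ℝ) r → HasDerivAt (y₂ a b)
      ((-(2*b)) * t^(-(2*b)-1) * gg a b t + t^(-(2*b)) * gg1 a b t) t := by
    intro t ht
    obtain ⟨ht0, htr⟩ := ht
    have habs : |t| < r := by rw [abs_of_pos ht0]; exact htr
    have hp : HasDerivAt (fun z : ℝ => z^(-(2*b)) * gg a b z)
        ((-(2*b)) * t^(-(2*b)-1) * gg a b t + t^(-(2*b)) * gg1 a b t) t :=
      (Real.hasDerivAt_rpow_const (Or.inl ht0.ne')).mul (hDg t habs)
    apply hp.congr_of_eventuallyEq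
    filter_upwards [isOpen_Ioo.mem_nhds (⟨ht0, htr⟩ : t ∈ Set.Ioo (0:ℝ) r)] with z hz
    exact y2_eq hb hz.1 (lt_trans hz.2 hr1)
  have hd1 : ∀ t ∈ Set.Ioo (0:ℝ) r, deriv (y₂ a b) t
      = (-(2*b)) * t^(-(2*b)-1) * gg a b t + t^(-(2*b)) * gg1 a b t :=
    fun t ht => (hder t ht).deriv
  have hD2 : HasDerivAt
      (fun t : ℝ => (-(2*b)) * t^(-(2*b)-1) * gg a b t + t^(-(2*b)) * gg1 a b t)
      ( ((-(2*b)) * ((-(2*b)-1) * x^(-(2*b)-1-1))) * gg a b x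
          + ((-(2*b)) * x^(-(2*b)-1)) * gg1 a b x
        + ((-(2*b)) * x^(-(2*b)-1) * gg1 a b x + x^(-(2*b)) * gg2 a b x) ) x :=
    (((Real.hasDerivAt_rpow_const (Or.inl hx0.ne')).const_mul (-(2*b))).mul
      (hDg x habsx)).add
      ((Real.hasDerivAt_rpow_const (Or.inl hx0.ne')).mul (hDg1 x habsx))
  have hev : deriv (y₂ a b) =ᶠ[nhds x]
      (fun t : ℝ => (-(2*b)) * t^(-(2*b)-1) * gg a b t + t^(-(2*b)) * gg1 a b t) := by
    filter_upwards [isOpen_Ioo.mem_nhds hx_mem] with z hz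
    exact hd1 z hz
  have hd2 : deriv (deriv (y₂ a b)) x
      = ((-(2*b)) * ((-(2*b)-1) * x^(-(2*b)-1-1))) * gg a b x
          + ((-(2*b)) * x^(-(2*b)-1)) * gg1 a b x
        + ((-(2*b)) * x^(-(2*b)-1) * gg1 a b x + x^(-(2*b)) * gg2 a b x) := by
    rw [hev.deriv_eq]
    exact hD2.deriv
  have hE := key_identity hb hx0 (lt_trans hxr hrs) hs1 hM0 hM
  have p0 : x^(-(2*b)) = x^(-(2*b)-2) * x^2 := by
    rw [← Real.rpow_natCast x 2, ← Real.rpow_add hx0]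
    norm_num
  have p1 : x^(-(2*b)-1) = x^(-(2*b)-2) * x := by
    have h := Real.rpow_add hx0 (-(2*b)-2) 1
    rw [Real.rpow_one] at h
    rw [show (-(2*b)-2+1 : ℝ) = -(2*b)-1 by ring] at h
    exact h
  have p2 : x^(-(2*b)-1-1) = x^(-(2*b)-2) := by
    rw [show (-(2*b)-1-1 : ℝ) = -(2*b)-2 by ring]
  rw [hd2, hd1 x hx_mem, y2_eq hb hx0 hx1, p1, p2, p0]
  linear_combination (x^(-(2*b)-2) * x^2) * hE
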